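/- Eigenvalue stability under trace norm perturbation: for bounded Hermitian matrices A and B of the same size, ‖λ(A) - λ(B)‖₁ ≤ ‖A - B‖₁, where λ(A) denotes the vector of eigenvalues of A sorted in decreasing order and the left-hand side is the ℓ¹ distance between the sorted eigenvalue vectors. -/

import Mathlib

open scoped Matrix ComplexOrder

noncomputable section

namespace QI

variable {n : ℕ}

def traceNorm {m : Type*} [Fintype m] [DecidableEq m] (A : Matrix m m ℂ) : ℝ :=
  ∑ i, Real.sqrt ((Matrix.isHermitian_mul_conjTranspose_self Aᴴ).eigenvalues i)

/-- The eigenvalues of a Hermitian matrix sorted in decreasing order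
(with multiplicity). -/
def sortedEigsDesc {A : Matrix (Fin n) (Fin n) ℂ} (h : A.IsHermitian) : Fin n → ℝ :=
  fun i => h.eigenvalues (Tuple.sort h.eigenvalues i.rev)

end QI

open QI

section Aux

open Matrix Module Submodule
open scoped ComplexInnerProductSpace

variable {n : ℕ} {A B : Matrix (Fin n) (Fin n) ℂ}

open Polynomial in
private lemma charpoly_unitary_diag (U : Matrix (Fin n) (Fin n) ℂ)
    (hU : U ∈ unitary (Matrix (Fin n) (Fin n) ℂ)) (d : Fin n → ℝ) :
    (U * Matrix.diagonal (Complex.ofReal ∘ d) * star U).charpoly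
      = ∏ i, (X - C ((d i : ℂ))) := by
  have h1 : (U.map C) * ((star U).map C) = 1 := by
    rw [← Matrix.map_mul, Unitary.mul_star_self_of_mem hU, Matrix.map_one C (map_zero C) (map_one C)]
  have hcm : charmatrix (U * Matrix.diagonal (Complex.ofReal ∘ d) * star U)
      = (U.map C) * charmatrix (Matrix.diagonal (Complex.ofReal ∘ d)) * ((star U).map C) := by
    unfold charmatrix
    rw [Matrix.mul_sub, Matrix.sub_mul]
    congr 1
    · have hc := (Matrix.scalar_commute (n := Fin n) (X : ℂ[X]) (fun r' => Commute.all _ _) (U.map C))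
      calc (Matrix.scalar (Fin n)) (X : ℂ[X])
          = (Matrix.scalar (Fin n)) (X : ℂ[X]) * ((U.map C) * ((star U).map C)) := by rw [h1, mul_one]
        _ = (U.map C) * (Matrix.scalar (Fin n)) (X : ℂ[X]) * ((star U).map C) := by
            rw [← mul_assoc, hc.eq]
    · simp [Matrix.map_mul]
  have hdiag : charmatrix (Matrix.diagonal (Complex.ofReal ∘ d))
      = Matrix.diagonal (fun i => (X : ℂ[X]) - C ((d i : ℂ))) := by
    ext i j
    by_cases h : i = j
    · subst h; simp [charmatrix_apply_eq]
    · simp [charmatrix_apply_ne _ _ _ h, Matrix.diagonal_apply_ne _ h]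
  have hdet : ((U.map C).det) * (((star U).map C).det) = 1 := by
    rw [← Matrix.det_mul, h1, Matrix.det_one]
  rw [Matrix.charpoly, hcm, Matrix.det_mul, Matrix.det_mul, mul_right_comm, hdet, one_mul,
    hdiag, Matrix.det_diagonal]

private lemma multiset_eq_of_unitary_conj {d e : Fin n → ℝ} {U V : Matrix (Fin n) (Fin n) ℂ}
    (hU : U ∈ unitary (Matrix (Fin n) (Fin n) ℂ)) (hV : V ∈ unitary (Matrix (Fin n) (Fin n) ℂ))
    (h : U * Matrix.diagonal (Complex.ofReal ∘ d) * star U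
       = V * Matrix.diagonal (Complex.ofReal ∘ e) * star V) :
    Multiset.map d Finset.univ.val = Multiset.map e Finset.univ.val := by
  have h1 := charpoly_unitary_diag U hU d
  have h2 := charpoly_unitary_diag V hV e
  rw [h, h2] at h1
  have key : ∀ f : Fin n → ℝ, (∏ i, (Polynomial.X - Polynomial.C ((f i : ℂ)))).roots
      = Multiset.map (fun i => ((f i : ℂ))) Finset.univ.val := by
    intro f
    have : (∏ i, (Polynomial.X - Polynomial.C ((f i : ℂ))))
        = ((Multiset.map (fun i => ((f i : ℂ))) Finset.univ.val).map
            (fun a => Polynomial.X - Polynomial.C a)).prod := by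
      rw [Multiset.map_map]; rfl
    rw [this, Polynomial.roots_multiset_prod_X_sub_C]
  have h3 : Multiset.map (fun i => ((e i : ℂ))) Finset.univ.val
      = Multiset.map (fun i => ((d i : ℂ))) Finset.univ.val := by
    rw [← key, ← key, h1]
  have h4 : Multiset.map (fun x : ℝ => (x : ℂ)) (Multiset.map e Finset.univ.val)
      = Multiset.map (fun x : ℝ => (x : ℂ)) (Multiset.map d Finset.univ.val) := by
    rw [Multiset.map_map, Multiset.map_map]; exact h3
  exact (Multiset.map_injective (fun a b => by exact_mod_cast Complex.ofReal_inj.mp) h4).symm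

private lemma sum_comp_eigenvalues (hA : A.IsHermitian)
    {d : Fin n → ℝ} {U : Matrix (Fin n) (Fin n) ℂ}
    (hU : U ∈ unitary (Matrix (Fin n) (Fin n) ℂ))
    (h : A = U * Matrix.diagonal (Complex.ofReal ∘ d) * star U) (g : ℝ → ℝ) :
    ∑ i, g (hA.eigenvalues i) = ∑ i, g (d i) := by
  have hspec := hA.spectral_theorem
  have hmem : (hA.eigenvectorUnitary : Matrix (Fin n) (Fin n) ℂ)
      ∈ unitary (Matrix (Fin n) (Fin n) ℂ) := SetLike.coe_mem _
  have hco : (RCLike.ofReal ∘ hA.eigenvalues : Fin n → ℂ) = Complex.ofReal ∘ hA.eigenvalues := rfl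
  rw [hco] at hspec
  rw [Unitary.conjStarAlgAut_apply] at hspec
  have hms := multiset_eq_of_unitary_conj hmem hU (by rw [← hspec, ← h])
  have : Multiset.map (g ∘ hA.eigenvalues) Finset.univ.val
      = Multiset.map (g ∘ d) Finset.univ.val := by
    rw [← Multiset.map_map g hA.eigenvalues, ← Multiset.map_map g d, hms]
  calc ∑ i, g (hA.eigenvalues i) = (Multiset.map (g ∘ hA.eigenvalues) Finset.univ.val).sum := rfl
    _ = (Multiset.map (g ∘ d) Finset.univ.val).sum := by rw [this]
    _ = ∑ i, g (d i) := rfl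

private lemma traceNorm_hermitian {C : Matrix (Fin n) (Fin n) ℂ} (hC : C.IsHermitian) :
    traceNorm C = ∑ i, |hC.eigenvalues i| := by
  have hmem : (hC.eigenvectorUnitary : Matrix (Fin n) (Fin n) ℂ)
      ∈ unitary (Matrix (Fin n) (Fin n) ℂ) := SetLike.coe_mem _
  have hco : (RCLike.ofReal ∘ hC.eigenvalues : Fin n → ℂ) = Complex.ofReal ∘ hC.eigenvalues := rfl
  have hspec := hC.spectral_theorem
  rw [hco] at hspec
  rw [Unitary.conjStarAlgAut_apply] at hspec
  have hM : Cᴴ * Cᴴᴴ = (hC.eigenvectorUnitary : Matrix (Fin n) (Fin n) ℂ)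
      * Matrix.diagonal (Complex.ofReal ∘ (fun i => hC.eigenvalues i * hC.eigenvalues i))
      * star (hC.eigenvectorUnitary : Matrix (Fin n) (Fin n) ℂ) := by
    rw [conjTranspose_conjTranspose, hC.eq]
    conv_lhs => rw [hspec]
    rw [show ∀ (u D : Matrix (Fin n) (Fin n) ℂ), (u * D * star u) * (u * D * star u)
        = u * (D * (star u * u) * D) * star u from fun u D => by simp only [mul_assoc],
      Unitary.star_mul_self_of_mem hmem, mul_one, diagonal_mul_diagonal]
    congr 1
    congr 1
    funext i j
    rcases eq_or_ne i j with h | h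
    · subst h; simp
    · simp [Matrix.diagonal_apply_ne _ h]
  have := sum_comp_eigenvalues (Matrix.isHermitian_mul_conjTranspose_self Cᴴ) hmem hM Real.sqrt
  rw [traceNorm, this]
  exact Finset.sum_congr rfl fun i _ => Real.sqrt_mul_self_eq_abs _

private lemma re_trace_conj_diag {U : Matrix (Fin n) (Fin n) ℂ}
    (hU : U ∈ unitary (Matrix (Fin n) (Fin n) ℂ)) (e : Fin n → ℝ) :
    (Matrix.trace (U * Matrix.diagonal (Complex.ofReal ∘ e) * star U)).re = ∑ i, e i := by
  rw [Matrix.trace_mul_cycle, Unitary.star_mul_self_of_mem hU, one_mul, Matrix.trace_diagonal]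
  simp

private lemma re_trace_eq_sum_eigenvalues (hA : A.IsHermitian) :
    (Matrix.trace A).re = ∑ i, hA.eigenvalues i := by
  conv_lhs => rw [hA.spectral_theorem]
  exact re_trace_conj_diag (SetLike.coe_mem _) _

private lemma sum_sortedEigsDesc (hA : A.IsHermitian) :
    ∑ k, sortedEigsDesc hA k = ∑ i, hA.eigenvalues i := by
  rw [← Equiv.sum_comp (Fin.revPerm.trans (Tuple.sort hA.eigenvalues)) hA.eigenvalues]
  rfl

private def sortPerm (hA : A.IsHermitian) : Equiv.Perm (Fin n) :=
  Fin.revPerm.trans (Tuple.sort hA.eigenvalues)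

private def sBasis (hA : A.IsHermitian) : OrthonormalBasis (Fin n) ℂ (EuclideanSpace ℂ (Fin n)) :=
  hA.eigenvectorBasis.reindex (sortPerm hA).symm

private lemma sBasis_apply (hA : A.IsHermitian) (i : Fin n) :
    sBasis hA i = hA.eigenvectorBasis (sortPerm hA i) := by
  simp [sBasis, OrthonormalBasis.reindex_apply]

private lemma sortedEigsDesc_eq (hA : A.IsHermitian) (i : Fin n) :
    sortedEigsDesc hA i = hA.eigenvalues (sortPerm hA i) := rfl

private lemma sortedEigsDesc_antitone (hA : A.IsHermitian) : Antitone (sortedEigsDesc hA) := by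
  intro i j hij
  exact Tuple.monotone_sort hA.eigenvalues (Fin.rev_le_rev.mpr hij)

private lemma toEuclideanLin_sBasis (hA : A.IsHermitian) (i : Fin n) :
    Matrix.toEuclideanLin A (sBasis hA i) = (sortedEigsDesc hA i : ℂ) • sBasis hA i := by
  have h := hA.mulVec_eigenvectorBasis (sortPerm hA i)
  apply (WithLp.equiv 2 (Fin n → ℂ)).injective
  rw [WithLp.equiv_apply, WithLp.equiv_apply, ofLp_toEuclideanLin_apply, sBasis_apply]
  rw [h]
  ext j
  simp [sortedEigsDesc_eq, Complex.real_smul]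

private lemma quad_repr (hA : A.IsHermitian) (x : EuclideanSpace ℂ (Fin n)) :
    RCLike.re (⟪x, Matrix.toEuclideanLin A x⟫ : ℂ)
      = ∑ i, sortedEigsDesc hA i * ‖(sBasis hA).repr x i‖ ^ 2 := by
  set b := sBasis hA with hb
  set c : Fin n → ℂ := fun i => b.repr x i with hc
  have hx : x = ∑ i, c i • b i := (b.sum_repr x).symm
  have hTx : Matrix.toEuclideanLin A x = ∑ i, (c i * (sortedEigsDesc hA i : ℂ)) • b i := by
    conv_lhs => rw [hx]
    rw [map_sum]
    refine Finset.sum_congr rfl fun i _ => ?_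
    rw [_root_.map_smul, hb, toEuclideanLin_sBasis, smul_smul]
  conv_lhs => rw [hTx, hx, b.orthonormal.inner_sum]
  rw [map_sum]
  refine Finset.sum_congr rfl fun i _ => ?_
  rw [← mul_assoc, RCLike.conj_mul, ← RCLike.ofReal_pow]
  have hcast : (RCLike.ofReal : ℝ → ℂ) = Complex.ofReal := rfl
  rw [hcast, ← Complex.ofReal_mul, ← hcast, RCLike.ofReal_re]
  simp only [hc]
  ring

private lemma norm_repr (b : OrthonormalBasis (Fin n) ℂ (EuclideanSpace ℂ (Fin n)))
    (x : EuclideanSpace ℂ (Fin n)) :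
    RCLike.re (⟪x, x⟫ : ℂ) = ∑ i, ‖b.repr x i‖ ^ 2 := by
  set c : Fin n → ℂ := fun i => b.repr x i with hc
  have hx : x = ∑ i, c i • b i := (b.sum_repr x).symm
  conv_lhs => rw [hx, b.orthonormal.inner_sum]
  rw [map_sum]
  refine Finset.sum_congr rfl fun i _ => ?_
  rw [RCLike.conj_mul, ← RCLike.ofReal_pow, RCLike.ofReal_re]

private lemma repr_eq_zero_of_mem_span (b : OrthonormalBasis (Fin n) ℂ (EuclideanSpace ℂ (Fin n)))
    (S : Set (Fin n)) {x : EuclideanSpace ℂ (Fin n)}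
    (hx : x ∈ Submodule.span ℂ (b '' S)) {j : Fin n} (hj : j ∉ S) : b.repr x j = 0 := by
  induction hx using Submodule.span_induction with
  | mem y hy =>
    obtain ⟨i, hi, rfl⟩ := hy
    rw [b.repr_self, EuclideanSpace.single_apply]
    have : j ≠ i := fun h => hj (h ▸ hi)
    simp [this]
  | zero => simp
  | add y z _ _ hy hz => rw [map_add]; simp only [PiLp.add_apply]; rw [hy, hz, add_zero]
  | smul a y _ hy => rw [_root_.map_smul]; simp only [PiLp.smul_apply]; rw [hy, smul_zero]

private lemma finrank_span_IicIci (b : OrthonormalBasis (Fin n) ℂ (EuclideanSpace ℂ (Fin n)))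
    (S : Set (Fin n)) [Fintype S] :
    finrank ℂ (Submodule.span ℂ (b '' S)) = Fintype.card S := by
  have li : LinearIndependent ℂ (fun i : S => b i) :=
    (b.orthonormal.comp Subtype.val Subtype.val_injective).linearIndependent
  have himg : ⇑b '' S = Set.range (fun i : S => b i) := Set.image_eq_range _ _
  rw [himg, finrank_span_eq_card li]

private lemma weyl_mono (hA : A.IsHermitian) (hB : B.IsHermitian) (hle : (B - A).PosSemidef)
    (k : Fin n) : sortedEigsDesc hA k ≤ sortedEigsDesc hB k := by
  classical
  set V := Submodule.span ℂ (⇑(sBasis hA) '' Set.Iic k) with hV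
  set W := Submodule.span ℂ (⇑(sBasis hB) '' Set.Ici k) with hW
  have hdim : finrank ℂ (EuclideanSpace ℂ (Fin n)) < finrank ℂ V + finrank ℂ W := by
    rw [hV, hW, finrank_span_IicIci, finrank_span_IicIci, Fintype.card_Iic,
      Fintype.card_Ici, Fin.card_Iic, Fin.card_Ici, finrank_euclideanSpace_fin]
    have := k.isLt
    omega
  have hint : ∃ x : EuclideanSpace ℂ (Fin n), x ∈ V ⊓ W ∧ x ≠ 0 := by
    have hsum := Submodule.finrank_sup_add_finrank_inf_eq V W
    have hsup : finrank ℂ ↥(V ⊔ W) ≤ finrank ℂ (EuclideanSpace ℂ (Fin n)) :=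
      Submodule.finrank_le _
    have hpos : 0 < finrank ℂ ↥(V ⊓ W) := by omega
    have : Nontrivial ↥(V ⊓ W) := Module.nontrivial_of_finrank_pos hpos
    obtain ⟨y, hy⟩ := exists_ne (0 : ↥(V ⊓ W))
    exact ⟨(y : EuclideanSpace ℂ (Fin n)), y.2, by simpa [Submodule.coe_eq_zero] using hy⟩
  obtain ⟨x, ⟨hxV, hxW⟩, hx0⟩ := hint
  have hS : 0 < RCLike.re (⟪x, x⟫ : ℂ) := by
    rw [inner_self_eq_norm_sq]
    exact pow_pos (norm_pos_iff.mpr hx0) 2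
  have hA_low : sortedEigsDesc hA k * RCLike.re (⟪x, x⟫ : ℂ)
      ≤ RCLike.re (⟪x, Matrix.toEuclideanLin A x⟫ : ℂ) := by
    rw [quad_repr hA, norm_repr (sBasis hA), Finset.mul_sum]
    refine Finset.sum_le_sum fun i _ => ?_
    by_cases hik : i ∈ Set.Iic k
    · have hmono := sortedEigsDesc_antitone hA hik
      have : (0:ℝ) ≤ ‖(sBasis hA).repr x i‖ ^ 2 := by positivity
      nlinarith
    · rw [repr_eq_zero_of_mem_span (sBasis hA) _ hxV hik]
      simp
  have hB_up : RCLike.re (⟪x, Matrix.toEuclideanLin B x⟫ : ℂ)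
      ≤ sortedEigsDesc hB k * RCLike.re (⟪x, x⟫ : ℂ) := by
    rw [quad_repr hB, norm_repr (sBasis hB), Finset.mul_sum]
    refine Finset.sum_le_sum fun i _ => ?_
    by_cases hik : i ∈ Set.Ici k
    · have hmono := sortedEigsDesc_antitone hB hik
      have : (0:ℝ) ≤ ‖(sBasis hB).repr x i‖ ^ 2 := by positivity
      nlinarith
    · rw [repr_eq_zero_of_mem_span (sBasis hB) _ hxW hik]
      simp
  have hAB : RCLike.re (⟪x, Matrix.toEuclideanLin A x⟫ : ℂ)
      ≤ RCLike.re (⟪x, Matrix.toEuclideanLin B x⟫ : ℂ) := by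
    have h0 := hle.re_dotProduct_nonneg ((WithLp.equiv 2 (Fin n → ℂ)) x)
    have hrel : ∀ M : Matrix (Fin n) (Fin n) ℂ, (⟪x, Matrix.toEuclideanLin M x⟫ : ℂ)
        = dotProduct (star ((WithLp.equiv 2 (Fin n → ℂ)) x))
            (M *ᵥ (WithLp.equiv 2 (Fin n → ℂ)) x) := by
      intro M
      rw [EuclideanSpace.inner_eq_star_dotProduct, dotProduct_comm]; rfl
    rw [hrel A, hrel B]
    have hsub : dotProduct (star ((WithLp.equiv 2 (Fin n → ℂ)) x))
          ((B - A) *ᵥ (WithLp.equiv 2 (Fin n → ℂ)) x)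
        = dotProduct (star ((WithLp.equiv 2 (Fin n → ℂ)) x))
            (B *ᵥ (WithLp.equiv 2 (Fin n → ℂ)) x)
          - dotProduct (star ((WithLp.equiv 2 (Fin n → ℂ)) x))
            (A *ᵥ (WithLp.equiv 2 (Fin n → ℂ)) x) := by
      rw [Matrix.sub_mulVec, dotProduct_sub]
    rw [hsub, map_sub] at h0
    linarith
  have := le_trans hA_low (le_trans hAB hB_up)
  exact le_of_mul_le_mul_right this hS

end Aux

open Matrix in
/-- **Eigenvalue stability under trace-norm perturbation**: for Hermitian
matrices `A`, `B` of the same size, `‖λ(A) - λ(B)‖₁ ≤ ‖A - B‖₁`, where `λ(·)`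
is the decreasingly sorted vector of eigenvalues and the left-hand side is the
`ℓ¹` distance between the sorted eigenvalue vectors. -/
theorem eigenvalue_stability {n : ℕ} (A B : Matrix (Fin n) (Fin n) ℂ)
    (hA : A.IsHermitian) (hB : B.IsHermitian) :
    ∑ i, |sortedEigsDesc hA i - sortedEigsDesc hB i| ≤ traceNorm (A - B) := by
  classical
  have hC : (A - B).IsHermitian := hA.sub hB
  set d : Fin n → ℝ := hC.eigenvalues with hd
  set U : Matrix (Fin n) (Fin n) ℂ := (hC.eigenvectorUnitary : Matrix (Fin n) (Fin n) ℂ) with hU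
  have hUmem : U ∈ unitary (Matrix (Fin n) (Fin n) ℂ) := SetLike.coe_mem _
  have hspec : A - B = U * Matrix.diagonal (Complex.ofReal ∘ d) * star U := hC.spectral_theorem
  set dp : Fin n → ℝ := fun i => (|d i| + d i) / 2 with hdp
  set dm : Fin n → ℝ := fun i => (|d i| - d i) / 2 with hdm
  have hdp_apply : ∀ i, dp i = (|d i| + d i) / 2 := fun i => rfl
  have hdm_apply : ∀ i, dm i = (|d i| - d i) / 2 := fun i => rfl
  have hdp_nonneg : ∀ i, 0 ≤ dp i := fun i => by
    rw [hdp_apply]; have := neg_abs_le (d i); linarith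
  have hdm_nonneg : ∀ i, 0 ≤ dm i := fun i => by
    rw [hdm_apply]; have := le_abs_self (d i); linarith
  set Cp : Matrix (Fin n) (Fin n) ℂ := U * Matrix.diagonal (Complex.ofReal ∘ dp) * star U with hCp
  set Cm : Matrix (Fin n) (Fin n) ℂ := U * Matrix.diagonal (Complex.ofReal ∘ dm) * star U with hCm
  have hdiagp : (Matrix.diagonal (Complex.ofReal ∘ dp)).PosSemidef := by
    refine Matrix.PosSemidef.diagonal fun i => ?_
    simp only [Function.comp_apply, Pi.zero_apply]
    rw [Complex.zero_le_real]
    exact hdp_nonneg i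
  have hdiagm : (Matrix.diagonal (Complex.ofReal ∘ dm)).PosSemidef := by
    refine Matrix.PosSemidef.diagonal fun i => ?_
    simp only [Function.comp_apply, Pi.zero_apply]
    rw [Complex.zero_le_real]
    exact hdm_nonneg i
  have hCpPSD : Cp.PosSemidef := by
    have := hdiagp.mul_mul_conjTranspose_same U
    rwa [← Matrix.star_eq_conjTranspose, ← hCp] at this
  have hCmPSD : Cm.PosSemidef := by
    have := hdiagm.mul_mul_conjTranspose_same U
    rwa [← Matrix.star_eq_conjTranspose, ← hCm] at this
  have harg : (fun i => (Complex.ofReal ∘ dp) i - (Complex.ofReal ∘ dm) i) = Complex.ofReal ∘ d := by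
    funext i
    simp only [Function.comp_apply, ← Complex.ofReal_sub]
    congr 1
    rw [hdp_apply, hdm_apply]
    ring
  have hsplit : Cp - Cm = A - B := by
    rw [hCp, hCm, ← Matrix.sub_mul, ← Matrix.mul_sub, Matrix.diagonal_sub, harg, ← hspec]
  have hBCp : (B + Cp).IsHermitian := hB.add hCpPSD.isHermitian
  have hACm : (A + Cm).IsHermitian := hA.add hCmPSD.isHermitian
  -- the four Weyl inequalities
  have w1 : ∀ k, sortedEigsDesc hA k ≤ sortedEigsDesc hBCp k := by
    intro k
    refine weyl_mono hA hBCp ?_ k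
    have heq : B + Cp - A = Cm := by
      ext i j
      have h : (Cp - Cm) i j = (A - B) i j := by rw [hsplit]
      simp only [Matrix.sub_apply, Matrix.add_apply] at h ⊢
      linear_combination h
    rw [heq]
    exact hCmPSD
  have w2 : ∀ k, sortedEigsDesc hB k ≤ sortedEigsDesc hBCp k := by
    intro k
    refine weyl_mono hB hBCp ?_ k
    have : B + Cp - B = Cp := by abel
    rw [this]
    exact hCpPSD
  have w3 : ∀ k, sortedEigsDesc hB k ≤ sortedEigsDesc hACm k := by
    intro k
    refine weyl_mono hB hACm ?_ k
    have heq : A + Cm - B = Cp := by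
      ext i j
      have h : (Cp - Cm) i j = (A - B) i j := by rw [hsplit]
      simp only [Matrix.sub_apply, Matrix.add_apply] at h ⊢
      linear_combination -h
    rw [heq]
    exact hCpPSD
  have w4 : ∀ k, sortedEigsDesc hA k ≤ sortedEigsDesc hACm k := by
    intro k
    refine weyl_mono hA hACm ?_ k
    have : A + Cm - A = Cm := by abel
    rw [this]
    exact hCmPSD
  -- pointwise bound
  have hpt : ∀ k, |sortedEigsDesc hA k - sortedEigsDesc hB k|
      ≤ (sortedEigsDesc hBCp k - sortedEigsDesc hB k)
        + (sortedEigsDesc hACm k - sortedEigsDesc hA k) := by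
    intro k
    have h1 := w1 k
    have h2 := w2 k
    have h3 := w3 k
    have h4 := w4 k
    rw [abs_sub_le_iff]
    constructor <;> linarith
  have hsum := Finset.sum_le_sum (fun k (_ : k ∈ Finset.univ) => hpt k)
  -- compute the sums via traces
  have htr : ∀ {M : Matrix (Fin n) (Fin n) ℂ} (hM : M.IsHermitian),
      ∑ k, sortedEigsDesc hM k = (Matrix.trace M).re := by
    intro M hM
    rw [sum_sortedEigsDesc hM, re_trace_eq_sum_eigenvalues hM]
  have htrCp : (Matrix.trace Cp).re = ∑ i, dp i := re_trace_conj_diag hUmem dp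
  have htrCm : (Matrix.trace Cm).re = ∑ i, dm i := re_trace_conj_diag hUmem dm
  have hsum2 : ∑ k, ((sortedEigsDesc hBCp k - sortedEigsDesc hB k)
        + (sortedEigsDesc hACm k - sortedEigsDesc hA k))
      = (∑ i, dp i) + (∑ i, dm i) := by
    rw [Finset.sum_add_distrib, Finset.sum_sub_distrib, Finset.sum_sub_distrib,
      htr hBCp, htr hB, htr hACm, htr hA, ← htrCp, ← htrCm,
      Matrix.trace_add, Matrix.trace_add, Complex.add_re, Complex.add_re]
    ring
  have htn : traceNorm (A - B) = (∑ i, dp i) + (∑ i, dm i) := by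
    rw [traceNorm_hermitian hC, ← Finset.sum_add_distrib]
    refine Finset.sum_congr rfl fun i _ => ?_
    rw [hdp_apply, hdm_apply]
    ring
  rw [htn]
  calc ∑ i, |sortedEigsDesc hA i - sortedEigsDesc hB i|
      ≤ ∑ k, ((sortedEigsDesc hBCp k - sortedEigsDesc hB k)
        + (sortedEigsDesc hACm k - sortedEigsDesc hA k)) := hsum
    _ = (∑ i, dp i) + (∑ i, dm i) := hsum2
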